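/- Smoothness-based gap lower bound (key step in the sublinear gap bound): if h : ℝⁿ → ℝ is concave and L-smooth, K ⊆ ℝⁿ is convex with diameter M, w ∈ K, and G = max_{v ∈ K} ⟨v − w, ∇h(w)⟩ is the Frank–Wolfe gap, then max_{v ∈ K} h(v) − h(w) ≥ G − L M²/2, and if G ≤ L M² then max_{v ∈ K} h(v) − h(w) ≥ G²/(2 L M²). -/

import Mathlib

open scoped RealInnerProductSpace

/-- Descent lemma: if `grad` is an `L`-Lipschitz gradient of `h`, then
`h (x + d) ≥ h x + ⟪d, grad x⟫ - L/2 * ‖d‖²`. -/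
lemma descent_lemma {n : ℕ} (h : EuclideanSpace ℝ (Fin n) → ℝ)
    (grad : EuclideanSpace ℝ (Fin n) → EuclideanSpace ℝ (Fin n))
    (hgrad : ∀ w, HasGradientAt h (grad w) w)
    (L : ℝ) (hL : 0 ≤ L) (hlip : LipschitzWith L.toNNReal grad)
    (x d : EuclideanSpace ℝ (Fin n)) :
    h (x + d) ≥ h x + ⟪d, grad x⟫ - L / 2 * ‖d‖ ^ 2 := by
  set φ : ℝ → ℝ := fun t => h (x + t • d) - t * ⟪d, grad x⟫ + L * t ^ 2 * ‖d‖ ^ 2 / 2 with hφ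
  have hderiv : ∀ t : ℝ, HasDerivAt φ
      (⟪d, grad (x + t • d)⟫ - ⟪d, grad x⟫ + L * t * ‖d‖ ^ 2) t := by
    intro t
    have h1 : HasDerivAt (fun t : ℝ => x + t • d) d t := by
      simpa using ((hasDerivAt_id t).smul_const d).const_add x
    have h2' : HasDerivAt (fun t : ℝ => h (x + t • d))
        (⟪grad (x + t • d), d⟫) t := by
      have := ((hgrad (x + t • d)).hasFDerivAt).comp_hasDerivAt t h1
      simpa [InnerProductSpace.toDual_apply_apply, Function.comp_def] using this
    have h2 : HasDerivAt (fun t : ℝ => h (x + t • d))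
        (⟪d, grad (x + t • d)⟫) t := by rw [real_inner_comm]; exact h2'
    have h3 : HasDerivAt (fun t : ℝ => t * ⟪d, grad x⟫) (⟪d, grad x⟫) t := by
      simpa using (hasDerivAt_id t).mul_const (⟪d, grad x⟫)
    have h4 : HasDerivAt (fun t : ℝ => L * t ^ 2 * ‖d‖ ^ 2 / 2)
        (L * t * ‖d‖ ^ 2) t := by
      have := (((hasDerivAt_pow 2 t).const_mul L).mul_const (‖d‖ ^ 2)).div_const 2
      exact this.congr_deriv (by ring)
    exact (h2.sub h3).add h4
  have hmono : MonotoneOn φ (Set.Icc (0:ℝ) 1) := by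
    apply monotoneOn_of_deriv_nonneg (convex_Icc 0 1)
    · exact fun t _ => ((hderiv t).continuousAt).continuousWithinAt
    · exact fun t _ => ((hderiv t).differentiableAt).differentiableWithinAt
    · intro t ht
      rw [(hderiv t).deriv]
      have ht0 : 0 ≤ t := le_of_lt (by simpa using (Set.mem_Ioo.mp (by simpa using ht)).1)
      have hcs : ⟪d, grad (x + t • d) - grad x⟫ ≥ -(‖d‖ * ‖grad (x + t • d) - grad x‖) := by
        have := abs_real_inner_le_norm d (grad (x + t • d) - grad x)
        linarith [neg_abs_le (⟪d, grad (x + t • d) - grad x⟫)]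
      have hlipb : ‖grad (x + t • d) - grad x‖ ≤ L * (t * ‖d‖) := by
        have := hlip.dist_le_mul (x + t • d) x
        rw [Real.coe_toNNReal L hL] at this
        simpa [dist_eq_norm, norm_smul, abs_of_nonneg ht0, mul_assoc] using this
      have hinner : ⟪d, grad (x + t • d)⟫ - ⟪d, grad x⟫ = ⟪d, grad (x + t • d) - grad x⟫ := by
        rw [inner_sub_right]
      rw [hinner]
      nlinarith [norm_nonneg d, mul_nonneg (mul_nonneg hL ht0) (norm_nonneg d),
        mul_le_mul_of_nonneg_left hlipb (norm_nonneg d)]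
  have := hmono (Set.left_mem_Icc.mpr zero_le_one) (Set.right_mem_Icc.mpr zero_le_one) zero_le_one
  simp only [hφ] at this
  simp only [zero_smul, add_zero, one_smul, zero_mul, sub_zero, zero_pow, mul_zero,
    zero_div, one_pow, mul_one, one_mul] at this
  linarith

/-- Smoothness-based gap lower bound: if `h` is concave and `L`-smooth, `K` is convex
with diameter `M`, `w ∈ K`, and `G = max_{v ∈ K} ⟪v - w, ∇h(w)⟫` is the Frank–Wolfe
gap, then `max_{v ∈ K} h v - h w ≥ G - L M²/2`, and if `G ≤ L M²` then
`max_{v ∈ K} h v - h w ≥ G²/(2 L M²)`. -/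
theorem stmt19 {n : ℕ} (h : EuclideanSpace ℝ (Fin n) → ℝ)
    (hconc : ConcaveOn ℝ Set.univ h)
    (grad : EuclideanSpace ℝ (Fin n) → EuclideanSpace ℝ (Fin n))
    (hgrad : ∀ w, HasGradientAt h (grad w) w)
    (L : ℝ) (hL : 0 ≤ L) (hlip : LipschitzWith L.toNNReal grad)
    (K : Set (EuclideanSpace ℝ (Fin n))) (hconv : Convex ℝ K)
    (M : ℝ) (hM : ∀ u ∈ K, ∀ v ∈ K, ‖u - v‖ ≤ M)
    (w : EuclideanSpace ℝ (Fin n)) (hw : w ∈ K)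
    (G : ℝ) (hG : IsGreatest ((fun v => ⟪v - w, grad w⟫) '' K) G)
    (hmaxval : ℝ) (hmax : IsGreatest (h '' K) hmaxval) :
    hmaxval - h w ≥ G - L * M ^ 2 / 2 ∧
    (G ≤ L * M ^ 2 → hmaxval - h w ≥ G ^ 2 / (2 * L * M ^ 2)) := by
  obtain ⟨v, hv, hvG'⟩ := hG.1
  have hvG : (⟪v - w, grad w⟫ : ℝ) = G := hvG'
  have hGnonneg : 0 ≤ G := by
    have h0 : (⟪w - w, grad w⟫ : ℝ) ≤ G := hG.2 ⟨w, hw, rfl⟩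
    simpa using h0
  have hM0 : 0 ≤ M := le_trans (norm_nonneg _) (hM w hw w hw)
  have hnorm : ‖v - w‖ ≤ M := hM v hv w hw
  have hnormsq : ‖v - w‖ ^ 2 ≤ M ^ 2 := by nlinarith [norm_nonneg (v - w)]
  -- key: for any γ ∈ [0,1], hmaxval - h w ≥ γ G - L γ² M² / 2
  have key : ∀ γ : ℝ, 0 ≤ γ → γ ≤ 1 →
      hmaxval - h w ≥ γ * G - L * γ ^ 2 * M ^ 2 / 2 := by
    intro γ hγ0 hγ1
    have hmem : w + γ • (v - w) ∈ K := by
      have := hconv hw hv (by linarith : (0:ℝ) ≤ 1 - γ) hγ0 (by ring)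
      convert this using 1
      module
    have hle : h (w + γ • (v - w)) ≤ hmaxval := hmax.2 ⟨_, hmem, rfl⟩
    have hdesc := descent_lemma h grad hgrad L hL hlip w (γ • (v - w))
    have hin : ⟪γ • (v - w), grad w⟫ = γ * G := by
      rw [real_inner_smul_left, hvG]
    have hns : ‖γ • (v - w)‖ ^ 2 = γ ^ 2 * ‖v - w‖ ^ 2 := by
      rw [norm_smul]; simp [mul_pow, abs_of_nonneg hγ0]
    rw [hin, hns] at hdesc
    nlinarith [sq_nonneg γ, mul_nonneg hL (sq_nonneg γ)]
  constructor
  · have := key 1 zero_le_one le_rfl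
    linarith
  · intro hGle
    by_cases hLM : L * M ^ 2 = 0
    · have hG0 : G = 0 := le_antisymm (by rwa [hLM] at hGle) hGnonneg
      have : h w ≤ hmaxval := hmax.2 ⟨w, hw, rfl⟩
      simp [hG0]; linarith
    · have hLMpos : 0 < L * M ^ 2 :=
        lt_of_le_of_ne (mul_nonneg hL (sq_nonneg M)) (Ne.symm hLM)
      set γ := G / (L * M ^ 2) with hγ
      have hγ0 : 0 ≤ γ := div_nonneg hGnonneg hLMpos.le
      have hγ1 : γ ≤ 1 := (div_le_one hLMpos).mpr hGle
      have := key γ hγ0 hγ1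
      have hLne : L ≠ 0 := fun h0 => hLM (by simp [h0])
      have hMne : M ≠ 0 := fun h0 => hLM (by simp [h0])
      have heq : γ * G - L * γ ^ 2 * M ^ 2 / 2 = G ^ 2 / (2 * L * M ^ 2) := by
        rw [hγ, div_pow]
        field_simp
        ring
      linarith [heq ▸ this]
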